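/- arXiv:1406.2389 — 2 statements merged into one kernel-verified Lean document; each statement's English description precedes it below -/
import Mathlib

section
/- For η a complex number of modulus 1 and α = (√5·η − 1)/(√5 − η), the 4×4 matrix U = (1/4)·[[−1, √5, √5, √5], [√5, −√5·α, η·α, √5·η], [√5, 1, √5·η, −√5·η], [√5, √5·α, −√5·α, 1]] is unitary, i.e., U·U* = I. -/
set_option maxHeartbeats 4000000 in
open Complex in
theorem stmt_9 (η α : ℂ) (hη : ‖η‖ = 1)
    (hα : α = (Real.sqrt 5 * η - 1) / (Real.sqrt 5 - η)) :
    let s : ℂ := Real.sqrt 5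
    let U : Matrix (Fin 4) (Fin 4) ℂ :=
      (1 / 4 : ℂ) • !![-1, s, s, s;
                        s, -s * α, η * α, s * η;
                        s, 1, s * η, -s * η;
                        s, s * α, -s * α, 1]
    U * U.conjTranspose = 1 := by
  intro s U
  have hsqrt : Real.sqrt 5 ≠ 1 := by
    intro h
    have := Real.sq_sqrt (by norm_num : (0:ℝ) ≤ 5)
    rw [h] at this; norm_num at this
  have h5 : ((Real.sqrt 5 : ℝ) : ℂ) ^ 2 = 5 := by
    rw [← Complex.ofReal_pow, Real.sq_sqrt (by norm_num : (0:ℝ) ≤ 5)]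
    norm_num
  have hη0 : η ≠ 0 := by
    intro h; rw [h] at hη; simp at hη
  have h1 : (starRingEnd ℂ) η * η = 1 := by
    rw [mul_comm, Complex.mul_conj, Complex.normSq_eq_norm_sq, hη]; norm_num
  have hcη : (starRingEnd ℂ) η = η⁻¹ := eq_inv_of_mul_eq_one_left h1
  have hd : ((Real.sqrt 5 : ℝ) : ℂ) - η ≠ 0 := by
    intro h
    have h' : ((Real.sqrt 5 : ℝ) : ℂ) = η := by linear_combination h
    rw [← h'] at hη
    rw [show ‖((Real.sqrt 5 : ℝ) : ℂ)‖ = Real.sqrt 5 by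
      simp [Complex.norm_real, _root_.abs_of_nonneg (Real.sqrt_nonneg 5)]] at hη
    exact hsqrt hη
  have hd2 : ((Real.sqrt 5 : ℝ) : ℂ) * η - 1 ≠ 0 := by
    intro h
    have h' : ((Real.sqrt 5 : ℝ) : ℂ) * η = 1 := by linear_combination h
    have h2 := congrArg (‖·‖) h'
    rw [norm_mul, hη, mul_one, norm_one,
      show ‖((Real.sqrt 5 : ℝ) : ℂ)‖ = Real.sqrt 5 by
        simp [Complex.norm_real, _root_.abs_of_nonneg (Real.sqrt_nonneg 5)]] at h2
    exact hsqrt h2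
  have hd3 : ((Real.sqrt 5 : ℝ) : ℂ) - η⁻¹ ≠ 0 := by
    intro h
    apply hd2
    field_simp at h
    linear_combination h
  have hd4 : ((Real.sqrt 5 : ℝ) : ℂ) * η⁻¹ - 1 ≠ 0 := by
    intro h
    apply hd
    field_simp at h
    linear_combination h
  have hcs : (starRingEnd ℂ) s = s := Complex.conj_ofReal _
  have hcα : (starRingEnd ℂ) α = (s - η) / (s * η - 1) := by
    rw [hα, map_div₀, map_sub, map_sub, map_one, map_mul, hcs, hcη]
    rw [div_eq_div_iff (by
      intro h
      apply hd2
      field_simp at h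
      linear_combination h) hd2]
    field_simp
    rw [show s = ((Real.sqrt 5:ℝ):ℂ) from rfl]; ring
  have e3 : ((Real.sqrt 5:ℝ):ℂ)^3 = 5*((Real.sqrt 5:ℝ):ℂ) := by
    linear_combination ((Real.sqrt 5:ℝ):ℂ) * h5
  have e4 : ((Real.sqrt 5:ℝ):ℂ)^4 = 25 := by
    linear_combination (((Real.sqrt 5:ℝ):ℂ)^2+5) * h5
  have e5 : ((Real.sqrt 5:ℝ):ℂ)^5 = 25*((Real.sqrt 5:ℝ):ℂ) := by
    linear_combination (((Real.sqrt 5:ℝ):ℂ)^3+5*((Real.sqrt 5:ℝ):ℂ)) * h5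
  have e6 : ((Real.sqrt 5:ℝ):ℂ)^6 = 125 := by
    linear_combination (((Real.sqrt 5:ℝ):ℂ)^4+5*((Real.sqrt 5:ℝ):ℂ)^2+25) * h5
  ext i j
  fin_cases i <;> fin_cases j <;>
    simp only [U, s, Matrix.smul_mul, Matrix.mul_smul, Matrix.smul_apply,
      Matrix.mul_apply, Matrix.conjTranspose_apply, Fin.sum_univ_four,
      Matrix.cons_val', Matrix.cons_val_zero, Matrix.cons_val_one,
      Matrix.head_cons, Matrix.head_fin_const, Matrix.empty_val',
      Matrix.cons_val_fin_one, Matrix.cons_val_two, Matrix.cons_val_three, Matrix.cons_val, Matrix.of_apply,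
      Matrix.tail_cons, Complex.star_def, map_mul, map_neg, map_one, map_div₀, map_ofNat, hcα, hcη, hcs,
      smul_eq_mul, Matrix.one_apply, Fin.mk.injEq, if_true, if_false]
  all_goals norm_num
  all_goals try simp only [Complex.star_def, map_ofNat, map_div₀, map_one, map_mul, map_neg, map_sub, hcα, hcη, hcs, Complex.conj_ofReal, s]
  all_goals try rw [hα]
  all_goals try field_simp
  all_goals try ring_nf
  all_goals try simp only [e6, e5, e4, e3, h5]
  all_goals try ring_nf
end

section
/- PGL(2,4) is isomorphic to the alternating group A₅. -/
open Matrix Projectivization Equiv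
open scoped LinearAlgebra.Projectivization

namespace Stmt14

variable {K : Type*} [Field K]

/-- The projectivization of `K²`. -/
abbrev PX (K : Type*) [Field K] := ℙ K (Fin 2 → K)

lemma inv_comp (g : GL (Fin 2) K) (v : Fin 2 → K) :
    ((g⁻¹ : GL (Fin 2) K) : Matrix (Fin 2) (Fin 2) K).mulVecLin
      (((g : Matrix (Fin 2) (Fin 2) K)).mulVecLin v) = v := by
  have : (((g⁻¹ : GL (Fin 2) K) : Matrix (Fin 2) (Fin 2) K) *
      (g : Matrix (Fin 2) (Fin 2) K)) = 1 := by
    rw [← Units.val_mul, inv_mul_cancel, Units.val_one]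
  have h2 := congrFun (congrArg DFunLike.coe (Matrix.mulVecLin_mul
    ((g⁻¹ : GL (Fin 2) K) : Matrix (Fin 2) (Fin 2) K)
    (g : Matrix (Fin 2) (Fin 2) K))) v
  rw [this] at h2
  simpa using h2.symm

lemma mulVecLin_inj (g : GL (Fin 2) K) :
    Function.Injective ((g : Matrix (Fin 2) (Fin 2) K)).mulVecLin := by
  intro a b h
  have := congrArg (((g⁻¹ : GL (Fin 2) K) : Matrix (Fin 2) (Fin 2) K)).mulVecLin h
  rwa [inv_comp, inv_comp] at this

/-- The permutation of the projective line induced by `g : GL 2 K`. -/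
noncomputable def proj (g : GL (Fin 2) K) : Equiv.Perm (PX K) where
  toFun := Projectivization.map ((g : Matrix (Fin 2) (Fin 2) K)).mulVecLin (mulVecLin_inj g)
  invFun := Projectivization.map (((g⁻¹ : GL (Fin 2) K) : Matrix (Fin 2) (Fin 2) K)).mulVecLin
    (mulVecLin_inj g⁻¹)
  left_inv := by
    intro x
    induction x using Projectivization.ind with
    | h v hv =>
      rw [Projectivization.map_mk, Projectivization.map_mk]
      apply (Projectivization.mk_eq_mk_iff' K _ _ _ hv).2
      exact ⟨1, by rw [one_smul, inv_comp]⟩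
  right_inv := by
    intro x
    induction x using Projectivization.ind with
    | h v hv =>
      rw [Projectivization.map_mk, Projectivization.map_mk]
      apply (Projectivization.mk_eq_mk_iff' K _ _ _ hv).2
      exact ⟨1, by rw [one_smul]; simpa using (inv_comp g⁻¹ v).symm⟩

lemma proj_mk (g : GL (Fin 2) K) (v : Fin 2 → K) (hv : v ≠ 0) :
    proj g (Projectivization.mk K v hv) =
      Projectivization.mk K ((g : Matrix (Fin 2) (Fin 2) K).mulVecLin v)
        (map_zero ((g : Matrix (Fin 2) (Fin 2) K).mulVecLin) ▸ (mulVecLin_inj g).ne hv) :=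
  rfl

/-- The homomorphism `GL 2 K →* Perm (ℙ¹ K)`. -/
noncomputable def projHom : GL (Fin 2) K →* Equiv.Perm (PX K) where
  toFun := proj
  map_one' := by
    ext x
    induction x using Projectivization.ind with
    | h v hv =>
      rw [Equiv.Perm.coe_one, id_eq, proj_mk]
      apply (Projectivization.mk_eq_mk_iff' K _ _ _ hv).2
      exact ⟨1, by simp⟩
  map_mul' g h := by
    ext x
    induction x using Projectivization.ind with
    | h v hv =>
      rw [Equiv.Perm.coe_mul, Function.comp_apply, proj_mk, proj_mk, proj_mk]
      apply (Projectivization.mk_eq_mk_iff' K _ _ _ _).2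
      refine ⟨1, ?_⟩
      rw [one_smul, Units.val_mul, Matrix.mulVecLin_mul]
      rfl

/-- Elements of the kernel are scalar matrices. -/
lemma scalar_of_mem_ker {g : GL (Fin 2) K} (hg : g ∈ (projHom (K := K)).ker) :
    ∃ a : Kˣ, (g : Matrix (Fin 2) (Fin 2) K) = (a : K) • 1 := by
  have key : ∀ (v : Fin 2 → K) (hv : v ≠ 0), ∃ a : Kˣ,
      (a : K) • v = (g : Matrix (Fin 2) (Fin 2) K).mulVecLin v := by
    intro v hv
    have h1 : proj g (Projectivization.mk K v hv) = Projectivization.mk K v hv := by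
      rw [show proj g = projHom g from rfl, hg]; rfl
    rw [proj_mk] at h1
    obtain ⟨a, ha⟩ := (Projectivization.mk_eq_mk_iff K _ _ _ _).1 h1
    exact ⟨a, by simpa [Units.smul_def] using ha⟩
  have e0 : (Pi.single 0 1 : Fin 2 → K) ≠ 0 := by
    intro h; simpa using congrFun h 0
  have e1 : (Pi.single 1 1 : Fin 2 → K) ≠ 0 := by
    intro h; simpa using congrFun h 1
  have e01 : (Pi.single 0 1 + Pi.single 1 1 : Fin 2 → K) ≠ 0 := by
    intro h; simpa using congrFun h 0
  obtain ⟨a, ha⟩ := key _ e0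
  obtain ⟨b, hb⟩ := key _ e1
  obtain ⟨c, hc⟩ := key _ e01
  rw [map_add, ← ha, ← hb] at hc
  have hca : (c : K) = a := by
    have := congrFun hc 0
    simpa using this
  have hcb : (c : K) = b := by
    have := congrFun hc 1
    simpa using this
  refine ⟨a, ?_⟩
  ext i j
  have hja : ∀ j : Fin 2, (g : Matrix (Fin 2) (Fin 2) K).mulVecLin (Pi.single j 1) =
      (a : K) • (Pi.single j 1 : Fin 2 → K) := by
    intro j
    fin_cases j
    · exact ha.symm
    · show (g : Matrix (Fin 2) (Fin 2) K).mulVecLin (Pi.single (1 : Fin 2) 1) =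
        (a : K) • (Pi.single (1 : Fin 2) 1 : Fin 2 → K)
      rw [← hb, ← hca, hcb]
  have := congrFun (hja j) i
  rw [Matrix.mulVecLin_apply, Matrix.mulVec_single] at this
  simp only [Pi.smul_apply, Matrix.col_apply, MulOpposite.smul_eq_mul_unop, MulOpposite.unop_op, mul_one] at this
  rcases eq_or_ne i j with rfl | hij
  · simpa [Matrix.one_apply] using this
  · simp only [Pi.smul_apply, Pi.single_apply, if_neg (Ne.symm hij), smul_zero] at this
    simp [this, Matrix.one_apply, hij]

lemma ker_projHom : (projHom (K := K)).ker = Subgroup.center (GL (Fin 2) K) := by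
  ext g
  constructor
  · intro hg
    obtain ⟨a, ha⟩ := scalar_of_mem_ker hg
    rw [Subgroup.mem_center_iff]
    intro h
    apply Units.ext
    rw [Units.val_mul, Units.val_mul, ha, smul_mul_assoc, one_mul, mul_smul_comm, mul_one]
  · intro hg
    have hcomm : ∀ t : TransvectionStruct (Fin 2) K,
        Commute t.toMatrix (g : Matrix (Fin 2) (Fin 2) K) := by
      intro t
      have htu : IsUnit (t.toMatrix.det) := by rw [t.det]; exact isUnit_one
      have := (Subgroup.mem_center_iff.1 hg) (Matrix.GeneralLinearGroup.mk'' t.toMatrix htu)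
      have h2 := congrArg Units.val this
      rw [Units.val_mul, Units.val_mul] at h2
      have hval : ((Matrix.GeneralLinearGroup.mk'' t.toMatrix htu :
          GL (Fin 2) K) : Matrix (Fin 2) (Fin 2) K) = t.toMatrix := rfl
      rw [hval] at h2
      exact h2
    obtain ⟨r, hr⟩ := Matrix.mem_range_scalar_of_commute_transvectionStruct hcomm
    have hr' : (g : Matrix (Fin 2) (Fin 2) K) = r • 1 := by
      rw [← hr]; ext i j; simp [Matrix.scalar_apply, Matrix.smul_apply, Matrix.one_apply,
        Matrix.diagonal_apply]
    have hr0 : r ≠ 0 := by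
      intro h
      have h1 : (g : Matrix (Fin 2) (Fin 2) K) = 0 := by rw [hr', h, zero_smul]
      have := g.inv_mul
      rw [h1, mul_zero] at this
      exact one_ne_zero (congrFun (congrFun this.symm 0) 0)
    rw [MonoidHom.mem_ker]
    refine Equiv.ext fun x => ?_
    induction x using Projectivization.ind with
    | h v hv =>
      rw [show (projHom g) (Projectivization.mk K v hv) = proj g (Projectivization.mk K v hv)
        from rfl, proj_mk, Equiv.Perm.coe_one, id_eq]
      exact (Projectivization.mk_eq_mk_iff' K _ _ _ hv).2
        ⟨r, by
          rw [hr']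
          show r • v = (r • (1 : Matrix (Fin 2) (Fin 2) K)) *ᵥ v
          rw [Matrix.smul_mulVec, Matrix.one_mulVec]⟩

/-- Scalar units in the kernel. -/
noncomputable def scalarUnit (a : Kˣ) : GL (Fin 2) K :=
  ⟨(a : K) • 1, ((a⁻¹ : Kˣ) : K) • 1, by simp [smul_smul], by simp [smul_smul]⟩

lemma scalarUnit_mem_ker (a : Kˣ) : scalarUnit a ∈ (projHom (K := K)).ker := by
  rw [MonoidHom.mem_ker]
  refine Equiv.ext fun x => ?_
  induction x using Projectivization.ind with
  | h v hv =>
    rw [show (projHom (scalarUnit a)) (Projectivization.mk K v hv) =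
      proj (scalarUnit a) (Projectivization.mk K v hv) from rfl, proj_mk,
      Equiv.Perm.coe_one, id_eq]
    exact (Projectivization.mk_eq_mk_iff' K _ _ _ hv).2
      ⟨a, by
        show (a : K) • v = ((a : K) • (1 : Matrix (Fin 2) (Fin 2) K)) *ᵥ v
        rw [Matrix.smul_mulVec, Matrix.one_mulVec]⟩

lemma ker_equiv_units : Nat.card (projHom (K := K)).ker = Nat.card Kˣ := by
  apply Nat.card_congr
  symm
  refine Equiv.ofBijective (fun a => ⟨scalarUnit a, scalarUnit_mem_ker a⟩) ⟨?_, ?_⟩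
  · intro a b h
    have h1 : (scalarUnit a : GL (Fin 2) K) = scalarUnit b := congrArg Subtype.val h
    have h2 : ((scalarUnit a : GL (Fin 2) K) : Matrix (Fin 2) (Fin 2) K) 0 0 =
        ((scalarUnit b : GL (Fin 2) K) : Matrix (Fin 2) (Fin 2) K) 0 0 := by rw [h1]
    simp only [scalarUnit, Matrix.smul_apply, Matrix.one_apply_eq, smul_eq_mul, mul_one] at h2
    exact Units.ext h2
  · rintro ⟨g, hg⟩
    obtain ⟨a, ha⟩ := scalar_of_mem_ker hg
    refine ⟨a, ?_⟩
    apply Subtype.ext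
    apply Units.ext
    show ((scalarUnit a : GL (Fin 2) K) : Matrix (Fin 2) (Fin 2) K) = ↑g
    rw [ha]
    rfl

section Counting

instance [Finite K] : Finite (PX K) := Quotient.finite _

lemma card_PX_mul [Fintype K] :
    Nat.card (PX K) * Nat.card Kˣ = Fintype.card K ^ 2 - 1 := by
  classical
  have key : ∀ x : PX K,
      Nat.card {v : {w : Fin 2 → K // w ≠ 0} // Projectivization.mk K v.1 v.2 = x} =
        Nat.card Kˣ := by
    intro x
    apply Nat.card_congr
    symm
    have tofun : ∀ a : Kˣ, Projectivization.mk K ((a : K) • x.rep)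
        (smul_ne_zero a.ne_zero x.rep_nonzero) = x := by
      intro a
      refine Eq.trans ?_ x.mk_rep
      exact (Projectivization.mk_eq_mk_iff K _ _ _ x.rep_nonzero).2 ⟨a, rfl⟩
    refine Equiv.ofBijective (fun a : Kˣ => ⟨⟨(a : K) • x.rep,
      smul_ne_zero a.ne_zero x.rep_nonzero⟩, tofun a⟩) ⟨?_, ?_⟩
    · intro a b h
      have h1 : (a : K) • x.rep = (b : K) • x.rep := congrArg (fun y => y.1.1) h
      exact Units.ext (smul_left_injective K x.rep_nonzero h1)
    · rintro ⟨⟨w, hw⟩, hmk⟩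
      obtain ⟨c, hc⟩ := (Projectivization.mk_eq_mk_iff K w x.rep hw x.rep_nonzero).1
        (hmk.trans x.mk_rep.symm)
      exact ⟨c, Subtype.ext (Subtype.ext hc)⟩
  letI : Fintype (PX K) := Fintype.ofFinite _
  have h1 : Nat.card {w : Fin 2 → K // w ≠ 0} = Fintype.card K ^ 2 - 1 := by
    rw [Nat.card_eq_fintype_card, Fintype.card_subtype_compl, Fintype.card_subtype_eq,
      Fintype.card_fun, Fintype.card_fin]
  have h2 := Nat.card_congr (Equiv.sigmaFiberEquiv
    (fun v : {w : Fin 2 → K // w ≠ 0} => Projectivization.mk K v.1 v.2))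
  rw [h1] at h2
  rw [← h2]
  have h3 : ∀ x : PX K, Fintype.card
      {v : {w : Fin 2 → K // w ≠ 0} // Projectivization.mk K v.1 v.2 = x} = Nat.card Kˣ := by
    intro x
    rw [← Nat.card_eq_fintype_card]
    exact key x
  conv_rhs => rw [Nat.card_eq_fintype_card, Fintype.card_sigma]
  rw [Finset.sum_congr rfl (fun x _ => h3 x), Finset.sum_const, smul_eq_mul,
    Finset.card_univ, Nat.card_eq_fintype_card]

end Counting

end Stmt14

open Stmt14

/-- `PGL(2,4)`, i.e. `GL(2,F₄)` modulo its center, is isomorphic to `A₅`. -/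
theorem stmt_14 :
    Nonempty ((GL (Fin 2) (GaloisField 2 2) ⧸
        Subgroup.center (GL (Fin 2) (GaloisField 2 2))) ≃*
      alternatingGroup (Fin 5)) := by
  classical
  set F := GaloisField 2 2 with hF
  letI : Fintype F := Fintype.ofFinite F
  have hcardF : Fintype.card F = 4 := by
    have h := GaloisField.card 2 2 (by norm_num)
    rw [Nat.card_eq_fintype_card] at h
    simpa using h
  have hunits : Nat.card Fˣ = 3 := by
    rw [Nat.card_eq_fintype_card, Fintype.card_units, hcardF]
  have hPX : Nat.card (PX F) = 5 := by
    have h := card_PX_mul (K := F)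
    rw [hunits, hcardF] at h
    omega
  letI : Fintype (PX F) := Fintype.ofFinite _
  have hPXf : Fintype.card (PX F) = 5 := by rw [← Nat.card_eq_fintype_card]; exact hPX
  let e5 : PX F ≃ Fin 5 := Fintype.equivFinOfCardEq hPXf
  let pc : Equiv.Perm (PX F) ≃* Equiv.Perm (Fin 5) :=
    { Equiv.permCongr e5 with
      map_mul' := by
        intro p q
        ext x
        simp [Equiv.permCongr_apply] }
  let φ : GL (Fin 2) F →* Equiv.Perm (Fin 5) := pc.toMonoidHom.comp projHom
  have hker : φ.ker = Subgroup.center (GL (Fin 2) F) := by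
    rw [← ker_projHom]
    ext g
    simp only [φ, MonoidHom.mem_ker, MonoidHom.comp_apply, MulEquiv.coe_toMonoidHom]
    exact pc.map_eq_one_iff
  have iso1 : (GL (Fin 2) F ⧸ Subgroup.center (GL (Fin 2) F)) ≃* φ.range :=
    (QuotientGroup.quotientMulEquivOfEq hker.symm).trans (QuotientGroup.quotientKerEquivRange φ)
  -- cardinalities
  have hGL : Nat.card (GL (Fin 2) F) = 180 := by
    rw [Matrix.card_GL_field, hcardF]
    simp [Fin.prod_univ_two]
  have hkercard : Nat.card φ.ker = 3 := by
    rw [hker, ← ker_projHom, ker_equiv_units, hunits]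
  have hGLsplit := Subgroup.card_eq_card_quotient_mul_card_subgroup φ.ker
  have hquot : Nat.card (GL (Fin 2) F ⧸ φ.ker) = Nat.card φ.range :=
    Nat.card_congr (QuotientGroup.quotientKerEquivRange φ).toEquiv
  have hrange : Nat.card φ.range = 60 := by
    rw [hGL, hquot, hkercard] at hGLsplit
    omega
  have hperm : Nat.card (Equiv.Perm (Fin 5)) = 120 := by
    rw [Nat.card_eq_fintype_card]
    simp [Fintype.card_perm]
    rfl
  have hindex : (φ.range).index = 2 := by
    have h := Subgroup.index_mul_card φ.range
    rw [hrange, hperm] at h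
    omega
  have hA : alternatingGroup (Fin 5) ≤ φ.range := by
    rw [← Equiv.Perm.closure_three_cycles_eq_alternating]
    refine (Subgroup.closure_le _).2 ?_
    intro σ hσ
    have h3 : σ ^ 3 = 1 := by
      rw [← (show Equiv.Perm.IsThreeCycle σ from hσ).orderOf]
      exact pow_orderOf_eq_one σ
    have hsq : (σ ^ 2) ^ 2 = σ := by
      rw [← pow_mul]
      show σ ^ 4 = σ
      have : σ ^ 4 = σ ^ 3 * σ := by rw [← pow_succ]
      rw [this, h3, one_mul]
    rw [← hsq]
    exact Subgroup.sq_mem_of_index_two hindex _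
  have hcardA : Nat.card (alternatingGroup (Fin 5)) = 60 := by
    have h := two_mul_card_alternatingGroup (α := Fin 5)
    rw [Fintype.card_perm] at h
    simp only [Fintype.card_fin] at h
    rw [← Nat.card_eq_fintype_card] at h
    have h120 : Nat.factorial 5 = 120 := by decide
    rw [h120] at h
    omega
  have hEq : φ.range = alternatingGroup (Fin 5) :=
    (Subgroup.eq_of_le_of_card_ge hA (by rw [hrange, hcardA])).symm
  exact ⟨iso1.trans (MulEquiv.subgroupCongr hEq)⟩
end
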